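/- With V₀, W₀, β₀, V, W, α, β, φ, I as above: if x ∈ W₀ satisfies β₀(x) = x (as an element of V₀, with x ∈ W₀) and φ(x) ∈ I = (1 - αβ)(W), then x = 0. -/

import Mathlib

open Finsupp

/-- The shift automorphism `(α f)(n) = f (n-1)` on finitely supported functions `ℤ →₀ M`. -/
noncomputable def sh (M : Type*) [AddCommGroup M] : AddAut (ℤ →₀ M) :=
  (Finsupp.domCongr (Equiv.addRight (1:ℤ)) : (ℤ →₀ M) ≃+ (ℤ →₀ M))

/-- The sum-of-coordinates map `E : (ℤ →₀ M) → M`. -/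
noncomputable def Esum (M : Type*) [AddCommGroup M] : (ℤ →₀ M) →+ M :=
  Finsupp.liftAddHom fun _ => AddMonoidHom.id M

/-- The inclusion `φ : M → (ℤ →₀ M)` at coordinate `0`. -/
noncomputable def phi (M : Type*) [AddCommGroup M] : M →+ (ℤ →₀ M) :=
  Finsupp.singleAddHom (0:ℤ)

/-- The projection `e_i` onto coordinate `i`. -/
noncomputable def eproj (M : Type*) [AddCommGroup M] (i : ℤ) : (ℤ →₀ M) →+ (ℤ →₀ M) :=
  (Finsupp.singleAddHom i).comp (Finsupp.applyAddHom i)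

/-- `q_i = ∑_{j ≤ i} e_j` : restriction to coordinates `≤ i`. -/
noncomputable def qproj (M : Type*) [AddCommGroup M] (i : ℤ) : (ℤ →₀ M) →+ (ℤ →₀ M) :=
  Finsupp.filterAddHom (fun j => j ≤ i)

section
variable {V₀ : Type*} [AddCommGroup V₀] (W₀ : AddSubgroup V₀) (β₀ : W₀ →+ V₀)

/-- The inclusion of `W = ℤ →₀ W₀` into `V = ℤ →₀ V₀`. -/
noncomputable def iota : (ℤ →₀ W₀) →+ (ℤ →₀ V₀) :=
  Finsupp.mapRange.addMonoidHom W₀.subtype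

/-- `β : W → V`, applying `β₀` coordinatewise. -/
noncomputable def betaMap : (ℤ →₀ W₀) →+ (ℤ →₀ V₀) :=
  Finsupp.mapRange.addMonoidHom β₀

/-- `(1 - αβ) : W → V`. -/
noncomputable def oneSubAlphaBeta : (ℤ →₀ W₀) →+ (ℤ →₀ V₀) :=
  iota W₀ - ((sh V₀).toAddMonoidHom.comp (betaMap W₀ β₀))

/-- `I = (1 - αβ)(W) ⊆ V`. -/
noncomputable def Isub : AddSubgroup (ℤ →₀ V₀) :=
  (oneSubAlphaBeta W₀ β₀).range

end

/-- If ,  and , then . -/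
theorem stmt3 {V₀ : Type*} [AddCommGroup V₀] (W₀ : AddSubgroup V₀) (β₀ : W₀ →+ V₀)
    (x : W₀) (hx : β₀ x = (x : V₀)) (hmem : phi V₀ (x : V₀) ∈ Isub W₀ β₀) :
    x = 0 := by
  obtain ⟨h, hh⟩ := hmem
  have key : ∀ i : ℤ, (h i : V₀) - β₀ (h (i-1)) = if i = 0 then (x:V₀) else 0 := by
    intro i
    have := DFunLike.congr_fun hh i
    simpa [oneSubAlphaBeta, iota, betaMap, sh, phi, Finsupp.single_apply, eq_comm,
      Finsupp.domCongr_apply, Finsupp.equivMapDomain_apply, ← sub_eq_add_neg] using this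
  have hneg : ∀ i : ℤ, i < 0 → h i = 0 := by
    intro i hi
    by_contra hne
    have hnonempty : (h.support.filter (· < 0)).Nonempty :=
      ⟨i, Finset.mem_filter.2 ⟨Finsupp.mem_support_iff.2 hne, hi⟩⟩
    set m := (h.support.filter (· < 0)).min' hnonempty with hm
    have hmmem := (h.support.filter (· < 0)).min'_mem hnonempty
    rw [Finset.mem_filter] at hmmem
    have hm1 : h (m - 1) = 0 := by
      by_contra hne1
      have : m - 1 ∈ h.support.filter (· < 0) :=
        Finset.mem_filter.2 ⟨Finsupp.mem_support_iff.2 hne1, by omega⟩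
      have := Finset.min'_le _ _ this
      omega
    have := key m
    rw [if_neg (by omega), hm1, map_zero, sub_zero] at this
    exact absurd (Subtype.ext this) (Finsupp.mem_support_iff.1 hmmem.1)
  have h0 : h 0 = x := by
    have := key 0
    rw [if_pos rfl, hneg (0-1) (by omega)] at this
    simpa using Subtype.ext (by simpa using this)
  have hpos : ∀ n : ℕ, h (n : ℤ) = x := by
    intro n
    induction n with
    | zero => simpa using h0
    | succ k ih =>
      have := key (k + 1)
      rw [if_neg (by omega)] at this
      have : (h ((k:ℤ) + 1) : V₀) = β₀ (h ((k:ℤ) + 1 - 1)) := by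
        rwa [sub_eq_zero] at this
      rw [show ((k:ℤ) + 1 - 1) = (k:ℤ) by ring, ih, hx] at this
      exact_mod_cast Subtype.ext this
  obtain ⟨M, hM⟩ : ∃ M : ℤ, ∀ i ∈ h.support, i ≤ M := Finset.exists_le _
  obtain ⟨n, hn⟩ := exists_nat_gt M
  have : h (n : ℤ) = 0 := by
    by_contra hne
    exact absurd (hM _ (Finsupp.mem_support_iff.2 hne)) (by omega)
  rw [hpos n] at this
  exact this
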